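/- arXiv:1309.7796 — 4 statements merged into one kernel-verified Lean document; each statement's English description precedes it below -/
import Mathlib

section
/- Let n ≥ 2 be an integer. The function ξ ↦ (sin ξ)^{n−1} / ∫_0^ξ (sin t)^{n−1} dt is strictly decreasing on the interval (0, π/2]. -/
open Real Set intervalIntegral

/-- For `n ≥ 2`, the function `ξ ↦ (sin ξ)^{n−1} / ∫_0^ξ (sin t)^{n−1} dt` is strictly
decreasing on `(0, π/2]`. -/
theorem stmt_9 (n : ℕ) (hn : 2 ≤ n) :
    StrictAntiOn (fun ξ : ℝ => Real.sin ξ ^ (n - 1) / ∫ t in (0:ℝ)..ξ, Real.sin t ^ (n - 1))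
      (Set.Ioc 0 (Real.pi / 2)) := by
  set m := n - 1 with hm
  have hm1 : 1 ≤ m := by omega
  set F : ℝ → ℝ := fun ξ => ∫ t in (0:ℝ)..ξ, Real.sin t ^ m with hFdef
  have hcont : Continuous fun t : ℝ => Real.sin t ^ m := Real.continuous_sin.pow m
  have hFderiv : ∀ x : ℝ, HasDerivAt F (Real.sin x ^ m) x := fun x =>
    (hcont.integral_hasStrictDerivAt 0 x).hasDerivAt
  have hFcont : Continuous F := by
    have : Differentiable ℝ F := fun x => (hFderiv x).differentiableAt
    exact this.continuous
  have hFpos : ∀ x ∈ Set.Ioc (0:ℝ) (Real.pi / 2), 0 < F x := by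
    intro x hx
    apply intervalIntegral_pos_of_pos_on
      (hcont.intervalIntegrable 0 x)
    · intro t ht
      exact pow_pos (Real.sin_pos_of_pos_of_lt_pi ht.1
        (lt_of_lt_of_le (ht.2.trans_le hx.2) (by linarith [Real.pi_pos]))) m
    · exact hx.1
  -- key inequality: for x ∈ Ioo 0 (π/2), m * cos x * F x < sin x ^ (m+1)
  have hkey : ∀ x ∈ Set.Ioo (0:ℝ) (Real.pi / 2),
      (m : ℝ) * Real.cos x * F x < Real.sin x ^ (m + 1) := by
    intro x hx
    set g : ℝ → ℝ := fun x => Real.sin x ^ (m + 1) - (m : ℝ) * Real.cos x * F x with hgdef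
    have hgderiv : ∀ y : ℝ, HasDerivAt g
        ((↑(m+1) * Real.sin y ^ m * Real.cos y) -
          ((m : ℝ) * (-Real.sin y) * F y + (m : ℝ) * Real.cos y * Real.sin y ^ m)) y := by
      intro y
      have h1 : HasDerivAt (fun y => Real.sin y ^ (m + 1))
          (↑(m+1) * Real.sin y ^ (m + 1 - 1) * Real.cos y) y :=
        (Real.hasDerivAt_sin y).pow (m + 1)
      have h2 : HasDerivAt (fun y => (m : ℝ) * Real.cos y) ((m : ℝ) * (-Real.sin y)) y :=
        (Real.hasDerivAt_cos y).const_mul (m : ℝ)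
      have h3 := h2.mul (hFderiv y)
      have h4 := h1.sub h3
      rw [Nat.add_sub_cancel] at h4
      exact h4.congr_deriv (by push_cast; ring)
    have hmono : StrictMonoOn g (Set.Icc 0 (Real.pi / 2)) := by
      apply strictMonoOn_of_deriv_pos (convex_Icc _ _)
      · exact Continuous.continuousOn (by
          have : Differentiable ℝ g := fun y => (hgderiv y).differentiableAt
          exact this.continuous)
      · intro y hy
        rw [interior_Icc] at hy
        rw [(hgderiv y).deriv]
        have hsy : 0 < Real.sin y := Real.sin_pos_of_pos_of_lt_pi hy.1
          (lt_of_lt_of_le hy.2 (by linarith [Real.pi_pos]))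
        have hcy : 0 < Real.cos y := Real.cos_pos_of_mem_Ioo
          ⟨by linarith [hy.1, Real.pi_pos], hy.2⟩
        have hFy : 0 < F y := hFpos y ⟨hy.1, le_of_lt hy.2⟩
        have h1 : 0 < Real.sin y ^ m * Real.cos y := mul_pos (pow_pos hsy m) hcy
        have h2 : 0 ≤ (m : ℝ) * Real.sin y * F y := by positivity
        push_cast
        nlinarith
    have h0 : g 0 = 0 := by
      simp [hgdef, hFdef, Real.sin_zero, zero_pow (Nat.succ_ne_zero m)]
    have := hmono (Set.left_mem_Icc.2 (by linarith [Real.pi_pos]))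
      ⟨le_of_lt hx.1, le_of_lt hx.2⟩ hx.1
    rw [h0] at this
    have : 0 < Real.sin x ^ (m + 1) - (m:ℝ) * Real.cos x * F x := this
    linarith
  have hderiv : ∀ x ∈ Set.Ioo (0:ℝ) (Real.pi / 2),
      HasDerivAt (fun ξ : ℝ => Real.sin ξ ^ m / F ξ)
        (((m : ℝ) * Real.sin x ^ (m - 1) * Real.cos x * F x -
          Real.sin x ^ m * Real.sin x ^ m) / F x ^ 2) x := by
    intro x hx
    have h1 : HasDerivAt (fun ξ => Real.sin ξ ^ m)
        ((m : ℝ) * Real.sin x ^ (m - 1) * Real.cos x) x := (Real.hasDerivAt_sin x).pow m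
    exact h1.div (hFderiv x) (ne_of_gt (hFpos x ⟨hx.1, le_of_lt hx.2⟩))
  apply strictAntiOn_of_deriv_neg (convex_Ioc _ _)
  · apply ContinuousOn.div (Real.continuous_sin.pow m).continuousOn hFcont.continuousOn
    intro x hx
    exact ne_of_gt (hFpos x hx)
  · intro x hx
    rw [interior_Ioc] at hx
    rw [(hderiv x hx).deriv]
    apply div_neg_of_neg_of_pos
    · have hsy : 0 < Real.sin x := Real.sin_pos_of_pos_of_lt_pi hx.1
        (lt_of_lt_of_le hx.2 (by linarith [Real.pi_pos]))
      have hk := hkey x hx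
      have hp : 0 < Real.sin x ^ (m - 1) := pow_pos hsy _
      have h2 : Real.sin x ^ (m - 1) * ((m : ℝ) * Real.cos x * F x) <
          Real.sin x ^ (m - 1) * Real.sin x ^ (m + 1) := by
        exact mul_lt_mul_of_pos_left hk hp
      have h3 : Real.sin x ^ (m - 1) * Real.sin x ^ (m + 1) =
          Real.sin x ^ m * Real.sin x ^ m := by
        rw [← pow_add, ← pow_add]
        congr 1
        omega
      nlinarith
    · exact pow_pos (hFpos x ⟨hx.1, le_of_lt hx.2⟩) 2
end

section
/- Let λ, δ > 0 and set η = (1/λ)·arctan(λ/δ). Then for every s with 0 ≤ s ≤ η, one has sin(λs) ≤ sin(λη)·e^{δ(s−η)}. -/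
/-- For `λ, δ > 0` and `η = (1/λ)·arctan(λ/δ)`, one has
`sin(λs) ≤ sin(λη)·e^{δ(s−η)}` for all `s ∈ [0, η]`. -/
theorem stmt_13 (l δ : ℝ) (hl : 0 < l) (hδ : 0 < δ)
    (η : ℝ) (hη : η = 1 / l * Real.arctan (l / δ)) :
    ∀ s : ℝ, 0 ≤ s → s ≤ η →
      Real.sin (l * s) ≤ Real.sin (l * η) * Real.exp (δ * (s - η)) := by
  intro s hs0 hsη
  set a := Real.arctan (l / δ) with ha_def
  have ha2 : a < Real.pi / 2 := Real.arctan_lt_pi_div_two _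
  have ha0 : 0 < a := by
    have := Real.arctan_strictMono (show (0:ℝ) < l / δ by positivity)
    rwa [Real.arctan_zero] at this
  have hlη : l * η = a := by
    rw [hη]; field_simp
  have hη0 : 0 < η := by rw [hη]; positivity
  set f : ℝ → ℝ := fun t => Real.sin (l * t) * Real.exp (-δ * t) with hf
  have hderiv : ∀ t, HasDerivAt f
      (Real.exp (-δ * t) * (l * Real.cos (l * t) - δ * Real.sin (l * t))) t := by
    intro t
    have h1 : HasDerivAt (fun t => Real.sin (l * t)) (l * Real.cos (l * t)) t := by
      have := (Real.hasDerivAt_sin (l * t)).comp t ((hasDerivAt_id t).const_mul l)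
      simpa [mul_comm, Function.comp_def] using this
    have h2 : HasDerivAt (fun t => Real.exp (-δ * t)) (-δ * Real.exp (-δ * t)) t := by
      have := ((hasDerivAt_id t).const_mul (-δ)).exp
      simpa [mul_comm] using this
    have := h1.mul h2
    exact this.congr_deriv (by ring)
  have hmono : MonotoneOn f (Set.Icc 0 η) := by
    apply monotoneOn_of_deriv_nonneg (convex_Icc 0 η)
    · exact Continuous.continuousOn (by continuity)
    · intro t _
      exact (hderiv t).differentiableAt.differentiableWithinAt
    · intro t ht
      rw [(hderiv t).deriv]
      rw [interior_Icc, Set.mem_Ioo] at ht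
      have hlt0 : 0 ≤ l * t := by nlinarith [ht.1]
      have hlta : l * t < a := by
        calc l * t < l * η := by nlinarith [ht.2]
          _ = a := hlη
      have hltpi : l * t < Real.pi / 2 := lt_trans hlta ha2
      have hcos : 0 < Real.cos (l * t) :=
        Real.cos_pos_of_mem_Ioo ⟨by linarith [Real.pi_pos], hltpi⟩
      have htan : Real.tan (l * t) < l / δ := by
        have := Real.tan_lt_tan_of_nonneg_of_lt_pi_div_two hlt0 ha2 hlta
        rwa [ha_def, Real.tan_arctan] at this
      rw [Real.tan_eq_sin_div_cos, div_lt_div_iff₀ hcos hδ] at htan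
      have : 0 ≤ l * Real.cos (l * t) - δ * Real.sin (l * t) := by nlinarith
      positivity
  have hfs : f s ≤ f η :=
    hmono ⟨hs0, hsη⟩ ⟨le_of_lt hη0, le_refl η⟩ hsη
  have hkey : Real.sin (l * s) * Real.exp (-δ * s) ≤
      Real.sin (l * η) * Real.exp (-δ * η) := hfs
  have hexp : 0 < Real.exp (δ * s) := Real.exp_pos _
  have := mul_le_mul_of_nonneg_right hkey hexp.le
  calc Real.sin (l * s)
      = Real.sin (l * s) * Real.exp (-δ * s) * Real.exp (δ * s) := by
        rw [mul_assoc, ← Real.exp_add]; ring_nf; rw [Real.exp_zero, mul_one]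
    _ ≤ Real.sin (l * η) * Real.exp (-δ * η) * Real.exp (δ * s) := this
    _ = Real.sin (l * η) * Real.exp (δ * (s - η)) := by
        rw [mul_assoc, ← Real.exp_add]; ring_nf
end

section
/- Let n ≥ 2 be an integer and let δ, ε, R be positive reals with δ > 1/n and ε ≤ 1/(nδ). Set λ = (e^{δR}/ε)·√(1 − ε²δ²e^{−2δR}), η = (1/λ)·arctan(λ/δ), and define b : [0, R+η] → ℝ by b(t) = ε·e^{−δt} for t ∈ [0, R] and b(t) = ε·e^{−δR}·sin(λ(η+R−t))/sin(λη) for t ∈ [R, R+η]. Then for every r ∈ [0, R+η), b(r)^{n−1} ≥ (n−1)·δ·∫_r^{R+η} b(t)^{n−1} dt. -/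
open Real intervalIntegral in
lemma core_aux (k : ℕ) (l δ : ℝ) (hl : 0 < l) (hδ : 0 < δ) (u : ℝ) (hu0 : 0 ≤ u)
    (hu : u ≤ Real.arctan (l / δ)) :
    ((k : ℝ) + 1) * δ * ∫ s in (0:ℝ)..u, Real.sin s ^ (k + 1) ≤ l * Real.sin u ^ (k + 1) := by
  have harc : Real.arctan (l / δ) < π / 2 := Real.arctan_lt_pi_div_two _
  have hpt : ∀ s ∈ Set.Icc (0:ℝ) u,
      ((k : ℝ) + 1) * δ * Real.sin s ^ (k + 1)
        ≤ ((k : ℝ) + 1) * l * (Real.sin s ^ k * Real.cos s) := by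
    intro s hs
    have hs2 : s < π / 2 := lt_of_le_of_lt (hs.2.trans hu) harc
    have hcos : 0 < Real.cos s :=
      Real.cos_pos_of_mem_Ioo ⟨by linarith [Real.pi_pos, hs.1], hs2⟩
    have hsin : 0 ≤ Real.sin s :=
      Real.sin_nonneg_of_nonneg_of_le_pi hs.1 (by linarith [Real.pi_pos])
    have htan : Real.tan s ≤ l / δ := by
      have h0 : (0:ℝ) ≤ Real.arctan (l / δ) := by
        rw [← Real.arctan_zero]
        exact Real.arctan_strictMono.monotone (le_of_lt (div_pos hl hδ))
      have hmem1 : s ∈ Set.Ioo (-(π / 2)) (π / 2) :=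
        ⟨by linarith [Real.pi_pos, hs.1], hs2⟩
      have hmem2 : Real.arctan (l / δ) ∈ Set.Ioo (-(π / 2)) (π / 2) :=
        ⟨by linarith [Real.pi_pos], harc⟩
      have := Real.strictMonoOn_tan.monotoneOn hmem1 hmem2 (hs.2.trans hu)
      simpa [Real.tan_arctan] using this
    rw [Real.tan_eq_sin_div_cos] at htan
    have hkey : δ * Real.sin s ≤ l * Real.cos s := by
      rw [div_le_div_iff₀ hcos hδ] at htan
      linarith
    have hpow : (0:ℝ) ≤ Real.sin s ^ k := pow_nonneg hsin k
    calc ((k : ℝ) + 1) * δ * Real.sin s ^ (k + 1)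
        = ((k : ℝ) + 1) * (Real.sin s ^ k * (δ * Real.sin s)) := by ring
      _ ≤ ((k : ℝ) + 1) * (Real.sin s ^ k * (l * Real.cos s)) := by
          have hk1 : (0:ℝ) ≤ (k : ℝ) + 1 := by positivity
          have := mul_le_mul_of_nonneg_left (mul_le_mul_of_nonneg_left hkey hpow) hk1
          linarith
      _ = ((k : ℝ) + 1) * l * (Real.sin s ^ k * Real.cos s) := by ring
  have hInt : ∫ s in (0:ℝ)..u, Real.sin s ^ k * Real.cos s
      = Real.sin u ^ (k + 1) / ((k : ℝ) + 1) := by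
    have := integral_sin_pow_mul_cos_pow_odd (a := 0) (b := u) k 0
    simp only [mul_zero, zero_add, pow_one, pow_zero, mul_one, Real.sin_zero] at this
    rw [this, integral_pow]
    norm_num
  have h1 : ((k : ℝ) + 1) * δ * ∫ s in (0:ℝ)..u, Real.sin s ^ (k + 1)
      = ∫ s in (0:ℝ)..u, ((k : ℝ) + 1) * δ * Real.sin s ^ (k + 1) := by
    rw [intervalIntegral.integral_const_mul]
  have h2 : (∫ s in (0:ℝ)..u, ((k : ℝ) + 1) * δ * Real.sin s ^ (k + 1))
      ≤ ∫ s in (0:ℝ)..u, ((k : ℝ) + 1) * l * (Real.sin s ^ k * Real.cos s) := by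
    apply intervalIntegral.integral_mono_on hu0
    · exact (by fun_prop : Continuous fun s => ((k : ℝ) + 1) * δ * Real.sin s ^ (k + 1)).intervalIntegrable _ _
    · exact (by fun_prop : Continuous fun s => ((k : ℝ) + 1) * l * (Real.sin s ^ k * Real.cos s)).intervalIntegrable _ _
    · exact hpt
  rw [h1]
  refine h2.trans ?_
  rw [intervalIntegral.integral_const_mul, hInt]
  have hk1 : ((k:ℝ)+1) ≠ 0 := by positivity
  apply le_of_eq
  field_simp

/-- Inequality (13) of the paper: for the warping function `b` of the model space of
revolution, every radial domain satisfies the isoperimetric-type bound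
`b(r)^{n−1} ≥ (n−1)·δ·∫_r^{R+η} b(t)^{n−1} dt`. -/
theorem stmt_15 (n : ℕ) (hn : 2 ≤ n) (δ ε R : ℝ) (hδ : δ > 1 / n) (hδ0 : 0 < δ)
    (hε : 0 < ε) (hεn : ε ≤ 1 / (n * δ)) (hR : 0 < R)
    (l η : ℝ)
    (hl : l = Real.exp (δ * R) / ε * Real.sqrt (1 - ε ^ 2 * δ ^ 2 * Real.exp (-(2 * δ * R))))
    (hη : η = 1 / l * Real.arctan (l / δ))
    (b : ℝ → ℝ)
    (hb1 : ∀ t ∈ Set.Icc (0:ℝ) R, b t = ε * Real.exp (-(δ * t)))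
    (hb2 : ∀ t ∈ Set.Icc R (R + η),
      b t = ε * Real.exp (-(δ * R)) * (Real.sin (l * (η + R - t)) / Real.sin (l * η))) :
    ∀ r ∈ Set.Ico (0:ℝ) (R + η),
      (n - 1 : ℝ) * δ * ∫ t in r..(R + η), b t ^ (n - 1) ≤ b r ^ (n - 1) := by
  -- positivity of l
  have hn0 : (0:ℝ) < n := by positivity
  have hεδ : ε * δ ≤ 1 / n := by
    rw [le_div_iff₀ hn0]
    have : ε * (n * δ) ≤ 1 := by
      calc ε * (n * δ) ≤ (1 / (n * δ)) * (n * δ) := by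
            apply mul_le_mul_of_nonneg_right hεn (by positivity)
        _ = 1 := by field_simp
    linarith [this, mul_comm ε δ]
  have hεδ2 : ε * δ ≤ 1 / 2 := by
    have : (1:ℝ) / n ≤ 1 / 2 := by
      apply one_div_le_one_div_of_le <;> [norm_num; exact_mod_cast hn]
    linarith
  have hX : 0 < 1 - ε ^ 2 * δ ^ 2 * Real.exp (-(2 * δ * R)) := by
    have h1 : Real.exp (-(2 * δ * R)) < 1 := Real.exp_lt_one_iff.mpr (by nlinarith)
    have h2 : 0 < Real.exp (-(2 * δ * R)) := Real.exp_pos _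
    have h3 : 0 < ε * δ := mul_pos hε hδ0
    nlinarith [mul_lt_mul_of_pos_left h1 (mul_pos h3 h3)]
  have hl0 : 0 < l := by
    rw [hl]
    positivity
  have hle : l * η = Real.arctan (l / δ) := by
    rw [hη]; field_simp
  have harc0 : 0 < Real.arctan (l / δ) := by
    rw [← Real.arctan_zero]
    exact Real.arctan_strictMono (div_pos hl0 hδ0)
  have hη0 : 0 < η := by
    rw [hη]; positivity
  have harc2 : Real.arctan (l / δ) < Real.pi / 2 := Real.arctan_lt_pi_div_two _
  have hsinlη : 0 < Real.sin (l * η) := by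
    rw [hle]
    exact Real.sin_pos_of_pos_of_lt_pi harc0 (by linarith [Real.pi_pos])
  obtain ⟨k, rfl⟩ : ∃ k, n = k + 2 := ⟨n - 2, by omega⟩
  have hexp : k + 2 - 1 = k + 1 := rfl
  have hcast : ((k + 2 : ℕ) : ℝ) - 1 = (k : ℝ) + 1 := by push_cast; ring
  set c := ε * Real.exp (-(δ * R)) with hcdef
  have hc0 : 0 < c := by positivity
  set D := (c / Real.sin (l * η)) ^ (k + 1) with hDdef
  have hD0 : 0 < D := by positivity
  -- formula for the integral over [r', R+η] when r' ≥ R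
  have compute2 : ∀ r', R ≤ r' → r' ≤ R + η →
      ∫ t in r'..(R + η), b t ^ (k + 1)
        = D * (l⁻¹ * ∫ s in (0:ℝ)..(l * (R + η - r')), Real.sin s ^ (k + 1)) := by
    intro r' h1 h2
    have heq : Set.EqOn (fun t => b t ^ (k + 1))
        (fun t => D * Real.sin (l * ((η + R) - t)) ^ (k + 1)) (Set.uIcc r' (R + η)) := by
      intro t ht
      rw [Set.uIcc_of_le h2] at ht
      have htm : t ∈ Set.Icc R (R + η) := ⟨le_trans h1 ht.1, ht.2⟩
      simp only
      rw [hb2 t htm, hDdef]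
      ring
    rw [intervalIntegral.integral_congr heq,
      intervalIntegral.integral_const_mul]
    congr 1
    rw [intervalIntegral.integral_comp_sub_left (fun x => Real.sin (l * x) ^ (k + 1)) (η + R)]
    rw [show η + R - (R + η) = 0 by ring]
    rw [intervalIntegral.integral_comp_mul_left (fun x => Real.sin x ^ (k + 1)) hl0.ne']
    rw [mul_zero, show η + R - r' = R + η - r' by ring]
    simp [smul_eq_mul]
  intro r hr
  obtain ⟨hr0, hrlt⟩ := hr
  rw [hexp, hcast]
  rcases le_or_gt R r with hrR | hrR
  · -- case r ∈ [R, R+η)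
    rw [compute2 r hrR hrlt.le]
    set u := l * (R + η - r) with hudef
    have hu0 : 0 ≤ u := by
      have : 0 ≤ R + η - r := by linarith
      positivity
    have huarc : u ≤ Real.arctan (l / δ) := by
      rw [← hle, hudef]
      have : R + η - r ≤ η := by linarith
      nlinarith
    have hcore := core_aux k l δ hl0 hδ0 u hu0 huarc
    have hbr : b r ^ (k + 1) = D * Real.sin u ^ (k + 1) := by
      rw [hb2 r ⟨hrR, hrlt.le⟩, hDdef, hudef, show l * (η + R - r) = l * (R + η - r) by ring]
      ring
    rw [hbr]
    calc ((k:ℝ) + 1) * δ * (D * (l⁻¹ * ∫ s in (0:ℝ)..u, Real.sin s ^ (k + 1)))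
        = (D * l⁻¹) * (((k:ℝ) + 1) * δ * ∫ s in (0:ℝ)..u, Real.sin s ^ (k + 1)) := by ring
      _ ≤ (D * l⁻¹) * (l * Real.sin u ^ (k + 1)) := by
          apply mul_le_mul_of_nonneg_left hcore (by positivity)
      _ = D * Real.sin u ^ (k + 1) := by field_simp
  · -- case r ∈ [0, R)
    set μ := ((k:ℝ) + 1) * δ with hμdef
    have hμ0 : 0 < μ := by positivity
    have hi1 : IntervalIntegrable (fun t => b t ^ (k + 1)) MeasureTheory.volume r R := by
      apply IntervalIntegrable.congr_ae
        ((by fun_prop : Continuous fun t => (ε * Real.exp (-(δ * t))) ^ (k + 1)).intervalIntegrable r R)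
      filter_upwards [MeasureTheory.ae_restrict_mem measurableSet_uIoc] with t ht
      rw [Set.uIoc_of_le hrR.le] at ht
      rw [hb1 t ⟨by linarith [ht.1], ht.2⟩]
    have hi2 : IntervalIntegrable (fun t => b t ^ (k + 1)) MeasureTheory.volume R (R + η) := by
      apply IntervalIntegrable.congr_ae
        ((by fun_prop : Continuous fun t =>
          (c * (Real.sin (l * (η + R - t)) / Real.sin (l * η))) ^ (k + 1)).intervalIntegrable R (R + η))
      filter_upwards [MeasureTheory.ae_restrict_mem measurableSet_uIoc] with t ht
      rw [Set.uIoc_of_le (by linarith : R ≤ R + η)] at ht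
      rw [hb2 t ⟨ht.1.le, ht.2⟩]
    rw [← intervalIntegral.integral_add_adjacent_intervals hi1 hi2]
    -- first integral
    have hI1 : ∫ t in r..R, b t ^ (k + 1)
        = ε ^ (k + 1) * μ⁻¹ * (Real.exp (-(μ * r)) - Real.exp (-(μ * R))) := by
      have heq : Set.EqOn (fun t => b t ^ (k + 1))
          (fun t => ε ^ (k + 1) * Real.exp (-μ * t)) (Set.uIcc r R) := by
        intro t ht
        rw [Set.uIcc_of_le hrR.le] at ht
        simp only
        rw [hb1 t ⟨by linarith [ht.1], ht.2⟩, mul_pow, ← Real.exp_nat_mul]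
        push_cast
        rw [hμdef]
        ring_nf
      rw [intervalIntegral.integral_congr heq, intervalIntegral.integral_const_mul]
      rw [intervalIntegral.integral_comp_mul_left Real.exp (neg_ne_zero.mpr hμ0.ne')]
      rw [integral_exp, smul_eq_mul]
      rw [show -μ * R = -(μ * R) by ring, show -μ * r = -(μ * r) by ring, inv_neg]
      ring
    rw [hI1, compute2 R le_rfl (by linarith), show R + η - R = η by ring]
    set S := ∫ s in (0:ℝ)..(l * η), Real.sin s ^ (k + 1) with hSdef
    have hS := core_aux k l δ hl0 hδ0 (l * η) (by positivity) (le_of_eq hle)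
    have hDS : D * Real.sin (l * η) ^ (k + 1) = c ^ (k + 1) := by
      rw [hDdef, div_pow, div_mul_cancel₀]
      positivity
    have hcμ : c ^ (k + 1) = ε ^ (k + 1) * Real.exp (-(μ * R)) := by
      rw [hcdef, mul_pow, ← Real.exp_nat_mul]
      push_cast
      rw [hμdef]
      ring_nf
    have hbrμ : b r ^ (k + 1) = ε ^ (k + 1) * Real.exp (-(μ * r)) := by
      rw [hb1 r ⟨hr0, hrR.le⟩, mul_pow, ← Real.exp_nat_mul]
      push_cast
      rw [hμdef]
      ring_nf
    have key : μ * (D * (l⁻¹ * S)) ≤ ε ^ (k + 1) * Real.exp (-(μ * R)) := by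
      calc μ * (D * (l⁻¹ * S))
          = (D * l⁻¹) * (((k:ℝ) + 1) * δ * S) := by rw [hμdef]; ring
        _ ≤ (D * l⁻¹) * (l * Real.sin (l * η) ^ (k + 1)) := by
            apply mul_le_mul_of_nonneg_left hS (by positivity)
        _ = D * Real.sin (l * η) ^ (k + 1) := by field_simp
        _ = ε ^ (k + 1) * Real.exp (-(μ * R)) := by rw [hDS, hcμ]
    have hA : μ * (ε ^ (k + 1) * μ⁻¹ * (Real.exp (-(μ * r)) - Real.exp (-(μ * R))))
        = ε ^ (k + 1) * (Real.exp (-(μ * r)) - Real.exp (-(μ * R))) := by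
      field_simp
    rw [hbrμ, mul_add, hA]
    linarith [key]
end

section
/- Let c > 0, let 0 ≤ r ≤ R ≤ T be reals, and let w : [0, T] → ℝ be an integrable function such that w(t) = e^{−ct} for all t ∈ [0, R] and 0 ≤ w(t) ≤ e^{−ct} for all t ∈ [0, T]. Define u : [r, T] → ℝ by u(t) = min(t − r, R − r)/c. Then ∫_r^T u(t)·w(t) dt ≥ (1/c²)·(1 − (1 + c(R−r))·e^{−c(R−r)}) · ∫_r^T w(t) dt. -/
open MeasureTheory intervalIntegral

private lemma key_alg (c s P E B : ℝ) (hc : 0 < c) (hs : 0 ≤ s) (hP : 0 < P) (hE : 0 < E)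
    (h1 : (1 + c * s) * E ≤ 1) (h2 : 1 - (1 + c * s) * E ≤ c * s) (hB : 0 ≤ B) :
    (1 / c ^ 2) * (1 - (1 + c * s) * E) * ((P - P * E) / c + B)
      ≤ (P - (1 + c * s) * (P * E)) / c ^ 3 + s / c * B := by
  have t1 : 0 ≤ P * (1 - (1 + c * s) * E) * E / c ^ 3 := by
    have : 0 ≤ 1 - (1 + c * s) * E := by linarith
    positivity
  have t2 : 0 ≤ (c * s - (1 - (1 + c * s) * E)) * B / c ^ 2 := by
    have h3 : 0 ≤ c * s - (1 - (1 + c * s) * E) := by linarith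
    positivity
  have hEq : (P - (1 + c * s) * (P * E)) / c ^ 3 + s / c * B
      = (1 / c ^ 2) * (1 - (1 + c * s) * E) * ((P - P * E) / c + B)
        + P * (1 - (1 + c * s) * E) * E / c ^ 3
        + (c * s - (1 - (1 + c * s) * E)) * B / c ^ 2 := by
    field_simp
    ring
  linarith

/-- One-dimensional content of inequality (18) of the paper: if `w = e^{−ct}` on `[0,R]`
and `0 ≤ w ≤ e^{−ct}` on `[0,T]`, then for `u(t) = min(t−r, R−r)/c`,
`∫_r^T u·w ≥ (1/c²)(1 − (1 + c(R−r))e^{−c(R−r)})·∫_r^T w`. -/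
theorem stmt_18 (c : ℝ) (hc : 0 < c) (r R T : ℝ) (hr : 0 ≤ r) (hrR : r ≤ R) (hRT : R ≤ T)
    (w : ℝ → ℝ) (hint : IntervalIntegrable w MeasureTheory.volume 0 T)
    (hw1 : ∀ t ∈ Set.Icc (0:ℝ) R, w t = Real.exp (-(c * t)))
    (hw2 : ∀ t ∈ Set.Icc (0:ℝ) T, 0 ≤ w t ∧ w t ≤ Real.exp (-(c * t)))
    (u : ℝ → ℝ) (hu : ∀ t, u t = min (t - r) (R - r) / c) :
    (1 / c ^ 2) * (1 - (1 + c * (R - r)) * Real.exp (-(c * (R - r)))) * (∫ t in r..T, w t)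
      ≤ ∫ t in r..T, u t * w t := by
  have hrT : r ≤ T := hrR.trans hRT
  have h0R : (0:ℝ) ≤ R := hr.trans hrR
  set s : ℝ := R - r with hsdef
  have hs0 : 0 ≤ s := by simp [hsdef]; linarith
  set P : ℝ := Real.exp (-(c * r)) with hPdef
  set E : ℝ := Real.exp (-(c * s)) with hEdef
  have hP : 0 < P := Real.exp_pos _
  have hE : 0 < E := Real.exp_pos _
  have hPE : Real.exp (-(c * R)) = P * E := by
    rw [hPdef, hEdef, ← Real.exp_add]
    congr 1
    ring
  -- continuity of u
  have hufun : u = fun t => min (t - r) (R - r) / c := funext hu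
  have hucont : Continuous u := by
    rw [hufun]
    exact ((continuous_id.sub continuous_const).min continuous_const).div_const c
  -- integrability of w on subintervals
  have hwrR : IntervalIntegrable w volume r R := by
    apply hint.mono_set
    rw [Set.uIcc_of_le hrR, Set.uIcc_of_le (hr.trans hrT)]
    exact Set.Icc_subset_Icc hr hRT
  have hwRT : IntervalIntegrable w volume R T := by
    apply hint.mono_set
    rw [Set.uIcc_of_le hRT, Set.uIcc_of_le (hr.trans hrT)]
    exact Set.Icc_subset_Icc h0R le_rfl
  have huwrR : IntervalIntegrable (fun t => u t * w t) volume r R :=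
    hwrR.continuousOn_mul hucont.continuousOn
  have huwRT : IntervalIntegrable (fun t => u t * w t) volume R T :=
    hwRT.continuousOn_mul hucont.continuousOn
  -- split integrals at R
  have hsplitw : (∫ t in r..T, w t) = (∫ t in r..R, w t) + ∫ t in R..T, w t :=
    (integral_add_adjacent_intervals hwrR hwRT).symm
  have hsplituw : (∫ t in r..T, u t * w t)
      = (∫ t in r..R, u t * w t) + ∫ t in R..T, u t * w t :=
    (integral_add_adjacent_intervals huwrR huwRT).symm
  -- compute ∫ r..R w
  have hW1 : (∫ t in r..R, w t) = (P - P * E) / c := by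
    have h1 : (∫ t in r..R, w t) = ∫ t in r..R, Real.exp (-(c * t)) := by
      apply integral_congr
      intro t ht
      rw [Set.uIcc_of_le hrR] at ht
      exact hw1 t ⟨hr.trans ht.1, ht.2⟩
    rw [h1]
    clear h1
    have h2 : ∀ t ∈ Set.uIcc r R, HasDerivAt (fun t => -Real.exp (-(c * t)) / c)
        (Real.exp (-(c * t))) t := by
      intro t _
      have hd : HasDerivAt (fun t : ℝ => -(c * t)) (-c) t := by
        simpa using (hasDerivAt_id t).const_mul (-c)
      have := (hd.exp).neg.div_const c
      refine this.congr_deriv ?_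
      field_simp
    rw [integral_eq_sub_of_hasDerivAt h2
      ((Continuous.intervalIntegrable (by fun_prop) _ _))]
    rw [← hPdef, hPE]
    ring
  -- compute ∫ r..R u*w
  have hI1 : (∫ t in r..R, u t * w t) = (P - (1 + c * s) * (P * E)) / c ^ 3 := by
    have h1 : (∫ t in r..R, u t * w t)
        = ∫ t in r..R, (t - r) / c * Real.exp (-(c * t)) := by
      apply integral_congr
      intro t ht
      rw [Set.uIcc_of_le hrR] at ht
      show u t * w t = (t - r) / c * Real.exp (-(c * t))
      rw [hu t, hw1 t ⟨hr.trans ht.1, ht.2⟩, min_eq_left (by linarith [ht.2])]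
    rw [h1]
    have h2 : ∀ t ∈ Set.uIcc r R,
        HasDerivAt (fun t => -(((t - r) / c + 1 / c ^ 2) * Real.exp (-(c * t))) / c)
        ((t - r) / c * Real.exp (-(c * t))) t := by
      intro t _
      have hd : HasDerivAt (fun t : ℝ => -(c * t)) (-c) t := by
        simpa using (hasDerivAt_id t).const_mul (-c)
      have hf : HasDerivAt (fun t : ℝ => (t - r) / c + 1 / c ^ 2) (1 / c) t :=
        (((hasDerivAt_id t).sub_const r).div_const c).add_const (1 / c ^ 2)
      have := ((hf.mul hd.exp).neg).div_const c
      refine this.congr_deriv ?_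
      field_simp
      ring
    rw [integral_eq_sub_of_hasDerivAt h2
      ((Continuous.intervalIntegrable (by fun_prop) _ _))]
    rw [← hPdef, hPE]
    field_simp
    ring
  -- compute ∫ R..T u*w
  have hI2 : (∫ t in r..T, u t * w t)
      = (P - (1 + c * s) * (P * E)) / c ^ 3 + s / c * ∫ t in R..T, w t := by
    rw [hsplituw, hI1]
    congr 1
    have h1 : (∫ t in R..T, u t * w t) = ∫ t in R..T, s / c * w t := by
      apply integral_congr
      intro t ht
      rw [Set.uIcc_of_le hRT] at ht
      show u t * w t = s / c * w t
      rw [hu t, min_eq_right (by linarith [ht.1])]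
    rw [h1, intervalIntegral.integral_const_mul]
  -- B nonneg
  have hB : 0 ≤ ∫ t in R..T, w t := by
    apply integral_nonneg hRT
    intro t ht
    exact (hw2 t ⟨h0R.trans ht.1, ht.2⟩).1
  -- exponential facts
  have hexp1 : c * s + 1 ≤ Real.exp (c * s) := Real.add_one_le_exp _
  have hEE : Real.exp (c * s) * E = 1 := by
    rw [hEdef, ← Real.exp_add]; simp
  have h1 : (1 + c * s) * E ≤ 1 := by nlinarith [hE]
  have h2 : 1 - (1 + c * s) * E ≤ c * s := by
    rcases le_or_gt (c * s) 1 with hle | hlt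
    · have hexp2 : -(c * s) + 1 ≤ E := Real.add_one_le_exp _
      nlinarith [mul_le_mul_of_nonneg_left hexp2 (show (0:ℝ) ≤ 1 + c * s by nlinarith [mul_nonneg hc.le hs0]),
        mul_nonneg (mul_nonneg hc.le hs0) (show (0:ℝ) ≤ 1 - c * s by linarith)]
    · nlinarith [mul_pos (by linarith : (0:ℝ) < 1 + c * s) hE]
  rw [hsplitw, hW1, hI2]
  exact key_alg c s P E _ hc hs0 hP hE h1 h2 hB
end
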